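/- For all w ≥ 1 and x ≥ 1, we have 1 < (1 + x/w) * ln(1 + w/x) ≤ (1 + 1/w) * ln(1 + w). -/

import Mathlib

private lemma g_lower (t : ℝ) (ht : 0 < t) :
    1 < (1 + t⁻¹) * Real.log (1 + t) := by
  have h1t : 0 < 1 + t := by linarith
  have h := Real.log_lt_sub_one_of_pos (x := (1 + t)⁻¹) (by positivity)
    (by
      intro h
      have : (1:ℝ) + t = 1 := by
        field_simp at h; linarith
      linarith)
  rw [Real.log_inv] at h
  -- h : -Real.log (1+t) < (1+t)⁻¹ - 1
  have hlog : t / (1 + t) < Real.log (1 + t) := by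
    have : (1:ℝ) - (1+t)⁻¹ = t / (1+t) := by field_simp; ring
    linarith
  have h2 : (1 + t⁻¹) * (t / (1 + t)) = 1 := by field_simp; ring
  have h3 : (1 + t⁻¹) * (t / (1+t)) < (1 + t⁻¹) * Real.log (1+t) := by
    apply mul_lt_mul_of_pos_left hlog
    positivity
  linarith

private lemma g_mono : MonotoneOn (fun t : ℝ => (1 + t⁻¹) * Real.log (1 + t)) (Set.Ioi 0) := by
  have hderiv : ∀ t ∈ Set.Ioi (0:ℝ), HasDerivAt (fun t : ℝ => (1 + t⁻¹) * Real.log (1 + t))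
      (-(t^2)⁻¹ * Real.log (1 + t) + (1 + t⁻¹) * (1 + t)⁻¹) t := by
    intro t ht
    have ht : 0 < t := ht
    have h1t : 0 < 1 + t := by linarith
    have h1 : HasDerivAt (fun t : ℝ => 1 + t⁻¹) (-(t^2)⁻¹) t :=
      (hasDerivAt_inv ht.ne').const_add 1
    have h2 : HasDerivAt (fun t : ℝ => Real.log (1 + t)) (1 * (1 + t)⁻¹) t := by
      have := ((hasDerivAt_id t).const_add 1).log h1t.ne'
      simpa [div_eq_mul_inv] using this
    simpa [one_mul] using h1.fun_mul h2
  apply StrictMonoOn.monotoneOn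
  apply strictMonoOn_of_deriv_pos (convex_Ioi 0)
  · exact ContinuousOn.mono (fun t ht => (hderiv t ht).continuousAt.continuousWithinAt) (by simp)
  · intro t ht
    rw [interior_Ioi] at ht
    have ht' : 0 < t := ht
    have h1t : 0 < 1 + t := by linarith
    rw [(hderiv t ht).deriv]
    have hlog : Real.log (1 + t) < t := by
      have := Real.log_lt_sub_one_of_pos h1t (by linarith [ht'])
      linarith
    have key : -(t^2)⁻¹ * Real.log (1 + t) + (1 + t⁻¹) * (1 + t)⁻¹
        = (t - Real.log (1 + t)) / t^2 := by
      field_simp; ring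
    rw [key]
    apply div_pos (by linarith) (by positivity)

theorem R_bounds (w x : ℝ) (hw : 1 ≤ w) (hx : 1 ≤ x) :
    1 < (1 + x / w) * Real.log (1 + w / x) ∧
      (1 + x / w) * Real.log (1 + w / x) ≤ (1 + 1 / w) * Real.log (1 + w) := by
  have hw0 : 0 < w := by linarith
  have hx0 : 0 < x := by linarith
  have ht : 0 < w / x := by positivity
  have hrw : x / w = (w / x)⁻¹ := by field_simp
  constructor
  · rw [hrw]
    exact g_lower _ ht
  · have hle : w / x ≤ w := by
      rw [div_le_iff₀ hx0]; nlinarith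
    have := g_mono (Set.mem_Ioi.mpr ht) (Set.mem_Ioi.mpr hw0) hle
    rw [hrw, one_div]; exact this
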